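/- arXiv:2604.12725 — 2 statements merged into one kernel-verified Lean document; each statement's English description precedes it below -/
import Mathlib

section
/- Let K(u) = ∑_{j=1}^{r} c_j u_j^{2k_j} on ℝ^r with c_j > 0 and k_j positive integers, and let Z_n = ∏_{j=1}^r ∫_{-ε}^{ε} exp(-n c_j u_j^{2k_j}) |u_j|^{h_j} du_j for nonnegative integers h_j. Then n^{λ} Z_n converges to a positive constant as n → ∞, where λ = ∑_{j=1}^{r} (h_j + 1)/(2 k_j). -/
open MeasureTheory Filter Set Real

private lemma rlct_g_integrable (c : ℝ) (hc : 0 < c) (k : ℕ) (hk : 1 ≤ k) (h : ℕ) :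
    Integrable (fun t : ℝ => Real.exp (-c * t ^ (2 * k)) * |t| ^ h) := by
  have hIoi : IntegrableOn (fun t : ℝ => Real.exp (-c * t ^ (2 * k)) * |t| ^ h) (Ioi 0) := by
    have base := integrableOn_rpow_mul_exp_neg_mul_rpow
      (p := ((2 * k : ℕ) : ℝ)) (s := (h : ℝ)) (b := c)
      (by exact neg_one_lt_zero.trans_le (Nat.cast_nonneg h))
      (by have h1 : (1:ℝ) ≤ (k:ℝ) := by exact_mod_cast hk
          push_cast; linarith) hc
    refine base.congr_fun (fun x hx => ?_) measurableSet_Ioi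
    beta_reduce
    rw [Real.rpow_natCast, Real.rpow_natCast, abs_of_pos (mem_Ioi.mp hx), mul_comm]
  have heven : ∀ x : ℝ, Real.exp (-c * (-x) ^ (2 * k)) * |(-x)| ^ h
      = Real.exp (-c * x ^ (2 * k)) * |x| ^ h := by
    intro x
    rw [abs_neg, Even.neg_pow ⟨k, two_mul k⟩]
  rw [← integrableOn_univ, ← @Iio_union_Ici _ _ (0 : ℝ), integrableOn_union,
    integrableOn_Ici_iff_integrableOn_Ioi]
  refine ⟨?_, hIoi⟩
  rw [← (Measure.measurePreserving_neg (volume : Measure ℝ)).integrableOn_comp_preimage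
      (Homeomorph.neg ℝ).measurableEmbedding]
  simp only [Function.comp_def, neg_preimage, neg_Iio, neg_neg, neg_zero]
  exact hIoi.congr_fun (fun x _ => (heven x).symm) measurableSet_Ioi

private lemma rlct_onedim (c : ℝ) (hc : 0 < c) (k : ℕ) (hk : 1 ≤ k) (h : ℕ)
    (ε : ℝ) (hε : 0 < ε) :
    ∃ J : ℝ, 0 < J ∧ Tendsto (fun n : ℕ => (n : ℝ) ^ (((h : ℝ) + 1) / (2 * k)) *
      ∫ u in (-ε)..ε, Real.exp (-(n : ℝ) * c * u ^ (2 * k)) * |u| ^ h) atTop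
      (nhds J) := by
  set g : ℝ → ℝ := fun t => Real.exp (-c * t ^ (2 * k)) * |t| ^ h with hg
  have hgint : Integrable g := rlct_g_integrable c hc k hk h
  have hk0 : (0 : ℝ) < 2 * (k : ℝ) := by positivity
  refine ⟨∫ t, g t, ?_, ?_⟩
  · rw [integral_pos_iff_support_of_nonneg (fun t => by positivity) hgint]
    have hsub : Ioi (0 : ℝ) ⊆ Function.support g := by
      intro x hx
      have hx0 : (0 : ℝ) < x := hx
      have : 0 < g x := by
        have : 0 < |x| := abs_pos.mpr hx0.ne'
        positivity
      exact this.ne'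
    calc (0 : ENNReal) < volume (Ioi (0 : ℝ)) := by simp [Real.volume_Ioi]
      _ ≤ volume (Function.support g) := measure_mono hsub
  · -- substitution identity for n ≥ 1
    set σ : ℕ → ℝ := fun n => ((n : ℝ)) ^ ((2 * (k : ℝ))⁻¹) with hσ
    have hσ_top : Tendsto σ atTop atTop :=
      (tendsto_rpow_atTop (by positivity)).comp tendsto_natCast_atTop_atTop
    have htop : Tendsto (fun n => σ n * ε) atTop atTop :=
      hσ_top.atTop_mul_const hε
    have hbot : Tendsto (fun n => σ n * (-ε)) atTop atBot := by
      have := hσ_top.atTop_mul_const_of_neg (neg_neg_iff_pos.mpr hε)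
      exact this
    have hmain : Tendsto (fun n : ℕ => ∫ t in (σ n * (-ε))..(σ n * ε), g t) atTop
        (nhds (∫ t, g t)) :=
      intervalIntegral_tendsto_integral hgint hbot htop
    refine hmain.congr' ?_
    filter_upwards [eventually_ge_atTop 1] with n hn
    have hn0 : (0 : ℝ) < (n : ℝ) := by exact_mod_cast hn
    have hσpos : 0 < σ n := Real.rpow_pos_of_pos hn0 _
    have hσ2k : σ n ^ (2 * k) = (n : ℝ) := by
      rw [hσ, ← Real.rpow_natCast (((n : ℝ)) ^ ((2 * (k : ℝ))⁻¹)) (2 * k),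
        ← Real.rpow_mul hn0.le]
      push_cast
      rw [inv_mul_cancel₀ hk0.ne', Real.rpow_one]
    have hσh1 : (n : ℝ) ^ (((h : ℝ) + 1) / (2 * k)) = σ n ^ h * σ n := by
      have e1 : σ n ^ h = (n : ℝ) ^ ((2 * (k : ℝ))⁻¹ * h) := by
        rw [hσ]; simp only; rw [Real.rpow_mul hn0.le, Real.rpow_natCast]
      rw [e1, hσ]; simp only
      rw [← Real.rpow_add hn0]
      congr 1
      field_simp
    have hcomp : (∫ u in (-ε)..ε, g (σ n * u))
        = (σ n)⁻¹ • ∫ t in (σ n * (-ε))..(σ n * ε), g t :=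
      intervalIntegral.integral_comp_mul_left g hσpos.ne'
    have hgsu : ∀ u : ℝ, g (σ n * u)
        = σ n ^ h * (Real.exp (-(n : ℝ) * c * u ^ (2 * k)) * |u| ^ h) := by
      intro u
      rw [hg]
      simp only
      rw [mul_pow, hσ2k, abs_mul, abs_of_pos hσpos, mul_pow]
      ring_nf
    have hint_eq : (∫ u in (-ε)..ε, Real.exp (-(n : ℝ) * c * u ^ (2 * k)) * |u| ^ h)
        = (σ n ^ h)⁻¹ * ∫ u in (-ε)..ε, g (σ n * u) := by
      rw [← intervalIntegral.integral_const_mul]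
      refine intervalIntegral.integral_congr (fun u _ => ?_)
      rw [hgsu u, ← mul_assoc, inv_mul_cancel₀ (by positivity), one_mul]
    rw [hint_eq, hcomp, hσh1, smul_eq_mul]
    field_simp

/-- RLCT under the additive normal crossing assumption: with
Z_n = ∏_j ∫_{-ε}^{ε} exp(-n c_j u^{2k_j}) |u|^{h_j} du and
λ = ∑_j (h_j + 1)/(2 k_j), the rescaled integrals n^λ Z_n converge to a
positive constant. -/
theorem rlct_additive_scaling
    {r : ℕ} (c : Fin r → ℝ) (hc : ∀ j, 0 < c j)
    (k : Fin r → ℕ) (hk : ∀ j, 1 ≤ k j) (h : Fin r → ℕ)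
    (ε : ℝ) (hε : 0 < ε)
    (Z : ℕ → ℝ)
    (hZ : ∀ n : ℕ, Z n =
      ∏ j, ∫ u in (-ε)..ε, Real.exp (-(n : ℝ) * c j * u ^ (2 * k j)) * |u| ^ (h j))
    (lam : ℝ) (hlam : lam = ∑ j, ((h j : ℝ) + 1) / (2 * k j)) :
    ∃ C : ℝ, 0 < C ∧ Tendsto (fun n : ℕ => (n : ℝ) ^ lam * Z n) atTop (nhds C) := by
  choose J hJpos hJtend using fun j => rlct_onedim (c j) (hc j) (k j) (hk j) (h j) ε hε
  refine ⟨∏ j, J j, Finset.prod_pos (fun j _ => hJpos j), ?_⟩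
  have hprod : Tendsto (fun n : ℕ => ∏ j, ((n : ℝ) ^ (((h j : ℝ) + 1) / (2 * k j)) *
      ∫ u in (-ε)..ε, Real.exp (-(n : ℝ) * c j * u ^ (2 * k j)) * |u| ^ (h j))) atTop
      (nhds (∏ j, J j)) :=
    tendsto_finset_prod _ (fun j _ => hJtend j)
  refine hprod.congr' ?_
  filter_upwards [eventually_ge_atTop 1] with n hn
  have hn0 : (0 : ℝ) < (n : ℝ) := by exact_mod_cast hn
  rw [Finset.prod_mul_distrib, hZ n, hlam, Real.rpow_sum_of_pos hn0]
end

section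
/- For c > 0, integers k ≥ 1, h ≥ 0, and ε > 0, the ratio of the second-moment integral to the normalizing integral satisfies n^{1/k} · (∫_{-ε}^{ε} u² e^{-n c u^{2k}} |u|^h du) / (∫_{-ε}^{ε} e^{-n c u^{2k}} |u|^h du) → B/A as n → ∞, where A = ∫_ℝ e^{-c t^{2k}} |t|^h dt and B = ∫_ℝ t² e^{-c t^{2k}} |t|^h dt. -/
open MeasureTheory Filter Set
open scoped ENNReal Topology

private lemma integrable_even_aux {f : ℝ → ℝ} (hsymm : ∀ x, f (-x) = f x)
    (hf : IntegrableOn f (Ioi 0)) : Integrable f := by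
  have int_Iic : IntegrableOn f (Iic 0) := by
    rw [← Measure.map_neg_eq_self (volume : Measure ℝ)]
    have m : MeasurableEmbedding fun x : ℝ => -x := (Homeomorph.neg ℝ).measurableEmbedding
    rw [m.integrableOn_map_iff]
    simp_rw [Function.comp_def, hsymm, neg_preimage, neg_Iic, neg_zero]
    exact Iff.mpr integrableOn_Ici_iff_integrableOn_Ioi hf
  have := int_Iic.union hf
  rwa [Iic_union_Ioi, integrableOn_univ] at this

private lemma integrable_FG (c : ℝ) (hc : 0 < c) (k : ℕ) (hk : 1 ≤ k) (h m : ℕ) :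
    Integrable (fun t : ℝ => Real.exp (-c * t ^ (2 * k)) * |t| ^ (h + m)) := by
  apply integrable_even_aux (f := fun t : ℝ => Real.exp (-c * t ^ (2 * k)) * |t| ^ (h + m))
  · intro x
    simp [Even.neg_pow (even_two_mul k)]
  · have base := integrableOn_rpow_mul_exp_neg_mul_rpow
      (p := ((2 * k : ℕ) : ℝ)) (s := ((h + m : ℕ) : ℝ)) (b := c)
      (lt_of_lt_of_le neg_one_lt_zero (Nat.cast_nonneg _)) (by exact_mod_cast Nat.one_le_iff_ne_zero.mpr (by omega)) hc
    apply base.congr_fun _ measurableSet_Ioi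
    intro x hx
    simp only [Real.rpow_natCast, abs_of_pos (show (0:ℝ) < x from hx)]
    ring


/-- Posterior mean-squared-error scaling in one dimension: the ratio of the
second-moment integral to the normalizing integral, multiplied by n^{1/k},
converges to B/A with A = ∫_ℝ e^{-c t^{2k}}|t|^h dt and
B = ∫_ℝ t² e^{-c t^{2k}}|t|^h dt. -/
theorem posterior_second_moment_scaling
    (c : ℝ) (hc : 0 < c) (k : ℕ) (hk : 1 ≤ k) (h : ℕ) (ε : ℝ) (hε : 0 < ε) :
    Tendsto
      (fun n : ℕ =>
        (n : ℝ) ^ ((1 : ℝ) / k) *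
          ((∫ u in (-ε)..ε, u ^ 2 * Real.exp (-(n : ℝ) * c * u ^ (2 * k)) * |u| ^ h) /
            (∫ u in (-ε)..ε, Real.exp (-(n : ℝ) * c * u ^ (2 * k)) * |u| ^ h)))
      atTop
      (nhds ((∫ t : ℝ, t ^ 2 * Real.exp (-c * t ^ (2 * k)) * |t| ^ h) /
        (∫ t : ℝ, Real.exp (-c * t ^ (2 * k)) * |t| ^ h))) := by
  have hk0 : (0:ℝ) < (k:ℝ) := by exact_mod_cast hk
  set F : ℝ → ℝ := fun t => Real.exp (-c * t ^ (2 * k)) * |t| ^ h with hFdef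
  set G : ℝ → ℝ := fun t => t ^ 2 * Real.exp (-c * t ^ (2 * k)) * |t| ^ h with hGdef
  have hFint : Integrable F := by simpa only [add_zero] using integrable_FG c hc k hk h 0
  have hGint : Integrable G := by
    apply (integrable_FG c hc k hk h 2).congr
    filter_upwards with t
    have : |t| ^ (h + 2) = |t| ^ h * t ^ 2 := by
      rw [pow_add, sq_abs]
    rw [hGdef]; simp only []
    rw [this]; ring
  have hA : 0 < ∫ t, F t := by
    rw [integral_pos_iff_support_of_nonneg (fun t => by positivity) hFint]
    have hsub : Ioi (0:ℝ) ⊆ Function.support F := by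
      intro t ht
      have ht0 : t ≠ 0 := ne_of_gt ht
      have : 0 < F t := by
        rw [hFdef]; simp only []
        have : 0 < |t| := abs_pos.mpr ht0
        positivity
      exact this.ne'
    calc (0:ENNReal) < volume (Ioi (0:ℝ)) := by rw [Real.volume_Ioi]; exact ENNReal.zero_lt_top
    _ ≤ volume (Function.support F) := measure_mono hsub
  set r : ℕ → ℝ := fun n => (n:ℝ) ^ ((1:ℝ)/(2*(k:ℝ))) with hrdef
  have hrtop : Tendsto r atTop atTop :=
    (tendsto_rpow_atTop (by positivity)).comp tendsto_natCast_atTop_atTop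
  have htop : Tendsto (fun n => r n * ε) atTop atTop := hrtop.atTop_mul_const hε
  have hbot : Tendsto (fun n => -(r n * ε)) atTop atBot :=
    tendsto_neg_atTop_atBot.comp htop
  have hGlim : Tendsto (fun n => ∫ t in (-(r n * ε))..(r n * ε), G t) atTop (𝓝 (∫ t, G t)) :=
    intervalIntegral_tendsto_integral hGint hbot htop
  have hFlim : Tendsto (fun n => ∫ t in (-(r n * ε))..(r n * ε), F t) atTop (𝓝 (∫ t, F t)) :=
    intervalIntegral_tendsto_integral hFint hbot htop
  refine (hGlim.div hFlim hA.ne').congr' ?_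
  filter_upwards [eventually_ge_atTop 1] with n hn
  have hn0 : (0:ℝ) < (n:ℝ) := by exact_mod_cast hn
  have hρ0 : 0 < r n := Real.rpow_pos_of_pos hn0 _
  have hpow : (r n) ^ (2*k) = (n:ℝ) := by
    rw [hrdef]
    simp only []
    rw [← Real.rpow_natCast _ (2*k), ← Real.rpow_mul hn0.le]
    rw [show (1:ℝ)/(2*(k:ℝ)) * ((2*k:ℕ):ℝ) = 1 by push_cast; field_simp]
    exact Real.rpow_one _
  have hsq : (n:ℝ) ^ ((1:ℝ)/(k:ℝ)) = (r n) ^ 2 := by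
    rw [hrdef]
    simp only []
    rw [← Real.rpow_natCast _ 2, ← Real.rpow_mul hn0.le]
    congr 1
    push_cast
    field_simp
  have keyF := intervalIntegral.integral_comp_mul_left (a := -ε) (b := ε) F hρ0.ne'
  rw [smul_eq_mul, mul_neg] at keyF
  have keyG := intervalIntegral.integral_comp_mul_left (a := -ε) (b := ε) G hρ0.ne'
  rw [smul_eq_mul, mul_neg] at keyG
  have hDen : (∫ u in (-ε)..ε, Real.exp (-(n:ℝ) * c * u ^ (2*k)) * |u| ^ h)
      = ((r n)^h)⁻¹ * ((r n)⁻¹ * ∫ t in (-(r n * ε))..(r n * ε), F t) := by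
    rw [← keyF, ← intervalIntegral.integral_const_mul]
    apply intervalIntegral.integral_congr
    intro u _
    rw [hFdef]
    simp only []
    rw [mul_pow, hpow, abs_mul, abs_of_pos hρ0, mul_pow]
    rw [show -(n:ℝ) * c * u ^ (2*k) = -c * ((n:ℝ) * u ^ (2*k)) by ring]
    field_simp
  have hNum : (∫ u in (-ε)..ε, u ^ 2 * Real.exp (-(n:ℝ) * c * u ^ (2*k)) * |u| ^ h)
      = ((r n)^(h+2))⁻¹ * ((r n)⁻¹ * ∫ t in (-(r n * ε))..(r n * ε), G t) := by
    rw [← keyG, ← intervalIntegral.integral_const_mul]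
    apply intervalIntegral.integral_congr
    intro u _
    rw [hGdef]
    simp only []
    rw [mul_pow (r n) u (2*k), hpow, abs_mul, abs_of_pos hρ0, mul_pow, mul_pow]
    rw [show -(n:ℝ) * c * u ^ (2*k) = -c * ((n:ℝ) * u ^ (2*k)) by ring]
    field_simp
    ring
  rw [hNum, hDen, hsq]
  by_cases hAn : (∫ t in (-(r n * ε))..(r n * ε), F t) = 0
  · simp [hAn]
  · have hrne : r n ≠ 0 := hρ0.ne'
    rw [Pi.div_apply]
    field_simp
    ring
end
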